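/- Let n be a positive integer, A an n × n integer matrix, M(x) = adj(x•I − A) the adjugate of its characteristic matrix, v = (1, 2, …, n)ᵀ, and m(x) = det(x•I − A). Then there exists an integer x₀ such that for all integers x > x₀, the vector y = M(x) *ᵥ v (entries obtained by evaluating the polynomial entries of M at x) satisfies 0 < y_0 < y_1 < ⋯ < y_{n−1} < m(x). -/
import Mathlib

open Polynomial

private lemma int_eventually_pos' (p : ℤ[X]) (hp : 0 < p.leadingCoeff) :
    ∀ᶠ x : ℤ in Filter.atTop, 0 < p.eval x := by
  rcases le_or_gt p.degree 0 with h | h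
  · have hpc : p = C (p.coeff 0) := p.eq_C_of_degree_le_zero h
    rw [hpc, leadingCoeff_C] at hp
    filter_upwards with x
    rw [hpc, eval_C]; exact hp
  · have hinj : Function.Injective (Int.castRingHom ℚ) := fun a b hab => by simpa using hab
    set q := p.map (Int.castRingHom ℚ) with hq
    have hqd : q.degree = p.degree := degree_map_eq_of_injective hinj p
    have hql : q.leadingCoeff = (p.leadingCoeff : ℚ) := by
      rw [leadingCoeff, hq, natDegree_map_eq_of_injective hinj, coeff_map]; rfl
    have ht : Filter.Tendsto (fun x : ℚ => q.eval x) Filter.atTop Filter.atTop :=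
      q.tendsto_atTop_of_leadingCoeff_nonneg (hqd ▸ h) (by rw [hql]; exact_mod_cast hp.le)
    have := (ht.comp tendsto_intCast_atTop_atTop).eventually_gt_atTop 0
    filter_upwards [this] with x hx
    have : (0 : ℚ) < ((p.eval x : ℤ) : ℚ) := by
      simpa [hq, Function.comp, eval_intCast_map] using hx
    exact_mod_cast this

private lemma lead_pos_aux (q : ℤ[X]) (d : ℕ) (h1 : ∀ m, d < m → q.coeff m = 0)
    (h2 : 0 < q.coeff d) : 0 < q.leadingCoeff := by
  have hd : q.natDegree = d :=
    le_antisymm (natDegree_le_iff_coeff_eq_zero.mpr h1) (le_natDegree_of_ne_zero h2.ne')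
  rwa [leadingCoeff, hd]

private lemma adj_charmatrix_coeff' {n : ℕ} (A : Matrix (Fin n) (Fin n) ℤ) :
    (∀ (k : ℕ), n ≤ k → ((Matrix.charmatrix A).adjugate).map (fun p => p.coeff k) = 0) ∧
    (0 < n → ((Matrix.charmatrix A).adjugate).map (fun p => p.coeff (n-1)) = 1) := by
  have h : A.charpoly • (1 : Matrix (Fin n) (Fin n) ℤ[X]) =
      Matrix.adjugate (Matrix.charmatrix A) * Matrix.charmatrix A := (Matrix.adjugate_mul _).symm
  apply_fun matPolyEquiv at h
  rw [_root_.map_mul, Matrix.matPolyEquiv_charmatrix, matPolyEquiv_smul_one] at h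
  set Q := matPolyEquiv ((Matrix.charmatrix A).adjugate) with hQ
  have hcp : A.charpoly.natDegree = n := by
    rw [Matrix.charpoly_natDegree_eq_dim, Fintype.card_fin]
  have hrhs : ∀ k : ℕ, (Q * (X - C A)).coeff (k+1) = Q.coeff k - Q.coeff (k+1) * A := by
    intro k
    rw [mul_sub, coeff_sub, coeff_mul_X, coeff_mul_C]
  have hstep : ∀ k : ℕ, n ≤ k → Q.coeff k = Q.coeff (k+1) * A := by
    intro k hk
    have := congrArg (fun p => p.coeff (k+1)) h
    simp only [coeff_map] at this
    rw [Polynomial.coeff_eq_zero_of_natDegree_lt (by omega), map_zero, hrhs] at this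
    exact (sub_eq_zero.mp this.symm)
  have hzero : ∀ k : ℕ, n ≤ k → Q.coeff k = 0 := by
    have key : ∀ m k : ℕ, n ≤ k → Q.coeff k = Q.coeff (k + m) * A ^ m := by
      intro m
      induction m with
      | zero => intro k hk; simp
      | succ m ih =>
        intro k hk
        rw [hstep k hk, ih (k+1) (by omega), pow_succ, ← mul_assoc]
        ring_nf
    intro k hk
    have := key (Q.natDegree + 1) k hk
    rw [show Q.coeff (k + (Q.natDegree + 1)) = 0 from
      Polynomial.coeff_eq_zero_of_natDegree_lt (by omega), zero_mul] at this
    exact this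
  constructor
  · intro k hk
    ext i j
    rw [Matrix.map_apply, ← matPolyEquiv_coeff_apply, ← hQ, hzero k hk]
  · intro hn
    have := congrArg (fun p => p.coeff n) h
    simp only [coeff_map] at this
    have hmon : A.charpoly.coeff n = 1 := by
      have := A.charpoly_monic
      rw [Monic, leadingCoeff, hcp] at this
      exact this
    have hc : (Q * (X - C A)).coeff n = Q.coeff (n-1) := by
      have h2 := hrhs (n-1)
      rw [show n - 1 + 1 = n by omega] at h2
      rw [h2, hzero n (le_refl n), zero_mul, sub_zero]
    rw [hmon, _root_.map_one, hc] at this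
    ext i j
    rw [Matrix.map_apply, ← matPolyEquiv_coeff_apply, ← hQ, ← this]

/-- With `M(x) = adj(x•I − A)`, `v = (1,…,n)ᵀ`, and
`m(x) = det(x•I − A)`, for all sufficiently large integers `x` the vector
`y = M(x) *ᵥ v` satisfies `0 < y 0 < y 1 < ⋯ < y (n-1) < m(x)`. -/
theorem adj_poly_strict_increasing (n : ℕ) (hn : 0 < n)
    (A : Matrix (Fin n) (Fin n) ℤ) :
    ∃ x₀ : ℤ, ∀ x : ℤ, x₀ < x →
      ∀ y : Fin n → ℤ,
        (y = fun i => ∑ k : Fin n,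
          ((((X : ℤ[X]) • (1 : Matrix (Fin n) (Fin n) ℤ[X]) - A.map C).adjugate i k).eval x)
            * ((k : ℤ) + 1)) →
        0 < y ⟨0, hn⟩ ∧ StrictMono y ∧
          ∀ i : Fin n,
            y i < ((((X : ℤ[X]) • (1 : Matrix (Fin n) (Fin n) ℤ[X]) - A.map C).det).eval x) := by
  classical
  have hBeq : ((X : ℤ[X]) • (1 : Matrix (Fin n) (Fin n) ℤ[X]) - A.map C)
      = Matrix.charmatrix A := by
    ext i j
    by_cases hij : i = j <;>
      simp [Matrix.charmatrix_apply, Matrix.one_apply, Matrix.diagonal_apply, hij,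
        Matrix.sub_apply, Matrix.smul_apply, Matrix.map_apply]
  obtain ⟨hz, ho⟩ := adj_charmatrix_coeff' A
  have hz' : ∀ (k : ℕ), n ≤ k → ∀ i j : Fin n,
      ((Matrix.charmatrix A).adjugate i j).coeff k = 0 := by
    intro k hk i j
    have := congrFun (congrFun (hz k hk) i) j
    simpa [Matrix.map_apply] using this
  have ho' : ∀ i j : Fin n,
      ((Matrix.charmatrix A).adjugate i j).coeff (n-1) = if i = j then 1 else 0 := by
    intro i j
    have := congrFun (congrFun (ho hn) i) j
    simpa [Matrix.map_apply, Matrix.one_apply] using this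
  set p : Fin n → ℤ[X] :=
    fun i => ∑ k : Fin n, (Matrix.charmatrix A).adjugate i k * C ((k : ℤ) + 1) with hp
  have hpcoeff : ∀ (i : Fin n) (m : ℕ),
      (p i).coeff m = ∑ k : Fin n, ((Matrix.charmatrix A).adjugate i k).coeff m * ((k : ℤ) + 1) := by
    intro i m
    rw [hp, finset_sum_coeff]
    exact Finset.sum_congr rfl fun k _ => coeff_mul_C _ _ _
  have hpz : ∀ (i : Fin n) (m : ℕ), n ≤ m → (p i).coeff m = 0 := by
    intro i m hm
    rw [hpcoeff]
    exact Finset.sum_eq_zero fun k _ => by rw [hz' m hm, zero_mul]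
  have hpl : ∀ i : Fin n, (p i).coeff (n-1) = (i : ℤ) + 1 := by
    intro i
    rw [hpcoeff]
    simp only [ho']
    rw [Finset.sum_eq_single i (fun k _ hk => by simp [Ne.symm hk])
      (fun h => absurd (Finset.mem_univ i) h)]
    simp
  have hchc : ∀ m : ℕ, n < m → A.charpoly.coeff m = 0 := by
    intro m hm
    apply Polynomial.coeff_eq_zero_of_natDegree_lt
    rw [Matrix.charpoly_natDegree_eq_dim, Fintype.card_fin]
    exact hm
  have hchn : A.charpoly.coeff n = 1 := by
    have := A.charpoly_monic
    rw [Monic, leadingCoeff, Matrix.charpoly_natDegree_eq_dim, Fintype.card_fin] at this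
    exact this
  have E : ∀ᶠ x : ℤ in Filter.atTop,
      (0 < (p ⟨0, hn⟩).eval x) ∧
      ((∀ i j : Fin n, i < j → 0 < (p j - p i).eval x) ∧
       (∀ i : Fin n, 0 < (A.charpoly - p i).eval x)) := by
    refine Filter.Eventually.and ?_ (Filter.Eventually.and ?_ ?_)
    · refine int_eventually_pos' _ (lead_pos_aux _ (n-1)
        (fun m hm => hpz _ m (by omega)) ?_)
      rw [hpl]; simp
    · refine Filter.eventually_all.mpr fun i => Filter.eventually_all.mpr fun j => ?_
      by_cases hij : i < j
      · have hposc : 0 < (p j - p i).coeff (n-1) := by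
          rw [coeff_sub, hpl, hpl]
          have : (i : ℤ) < (j : ℤ) := by exact_mod_cast hij
          omega
        filter_upwards [int_eventually_pos' _ (lead_pos_aux _ (n-1)
          (fun m hm => by rw [coeff_sub, hpz _ m (by omega), hpz _ m (by omega), sub_zero])
          hposc)] with x hx
        exact fun _ => hx
      · filter_upwards with x h
        exact absurd h hij
    · refine Filter.eventually_all.mpr fun i => ?_
      refine int_eventually_pos' _ (lead_pos_aux _ n ?_ ?_)
      · intro m hm
        rw [coeff_sub, hchc m hm, hpz _ m (by omega), sub_zero]
      · rw [coeff_sub, hchn, hpz _ n (le_refl n), sub_zero]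
        exact one_pos
  rw [Filter.eventually_atTop] at E
  obtain ⟨x₀, hE⟩ := E
  refine ⟨x₀, fun x hx y hy => ?_⟩
  obtain ⟨h1, h2, h3⟩ := hE x hx.le
  rw [hBeq] at hy
  have hyp : ∀ i : Fin n, y i = (p i).eval x := by
    intro i
    rw [hy, hp]
    rw [eval_finset_sum]
    exact Finset.sum_congr rfl fun k _ => by rw [eval_mul, eval_C]
  refine ⟨?_, ?_, ?_⟩
  · rw [hyp]; exact h1
  · intro i j hij
    have := h2 i j hij
    rw [eval_sub] at this
    rw [hyp i, hyp j]
    omega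
  · intro i
    have := h3 i
    rw [eval_sub] at this
    rw [hBeq, hyp i]
    have hdet : (Matrix.charmatrix A).det = A.charpoly := rfl
    rw [hdet]
    omega
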